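/- If ω is an entire function all of whose zeros lie in the open upper half plane and which satisfies |ω(z)/ω*(z)| < 1 whenever Im(z) > 0, where ω*(z) = conj(ω(conj z)), then every zero of the function ω(z) + ω*(z) is real. -/

import Mathlib

open Complex

theorem sum_omega_omegaStar_zeros_real
    (ω : ℂ → ℂ) (hdiff : Differentiable ℂ ω)
    (hzeros : ∀ z : ℂ, ω z = 0 → 0 < z.im)
    (hineq : ∀ z : ℂ, 0 < z.im →
      ‖ω z‖ < ‖starRingEnd ℂ (ω (starRingEnd ℂ z))‖)
    (z : ℂ) (hz : ω z + starRingEnd ℂ (ω (starRingEnd ℂ z)) = 0) :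
    z.im = 0 := by
  have habs : ‖ω z‖ = ‖starRingEnd ℂ (ω (starRingEnd ℂ z))‖ := by
    have : ω z = -(starRingEnd ℂ (ω (starRingEnd ℂ z))) := by linear_combination hz
    rw [this, norm_neg]
  rcases lt_trichotomy z.im 0 with h | h | h
  · have him : 0 < (starRingEnd ℂ z).im := by
      simpa using neg_pos.mpr h
    have := hineq (starRingEnd ℂ z) him
    rw [Complex.conj_conj] at this
    rw [Complex.norm_conj] at habs this
    linarith
  · exact h
  · have := hineq z h
    linarith [habs ▸ this]
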